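/- Fix T > 0 and for each real a with a·T < 1 let k^u(a) denote the unique k > |a| satisfying T·√(k² − a²) = arccos(a/k). Then the function a ↦ k^u(a) is strictly decreasing and convex on the interval (−∞, 1/T). -/

import Mathlib

open Real Set

noncomputable def Sf (x : ℝ) : ℝ := Real.sin x - x * Real.cos x
noncomputable def Ef (x : ℝ) : ℝ := x - Real.sin x * Real.cos x
noncomputable def Rf (x : ℝ) : ℝ := x ^ 2 + x * Real.sin x * Real.cos x - 2 * Real.sin x ^ 2
noncomputable def Rf' (x : ℝ) : ℝ :=
  2 * x - 3 * (Real.sin x * Real.cos x) + x * (Real.cos x ^ 2 - Real.sin x ^ 2)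
noncomputable def Kf (x : ℝ) : ℝ := x / Real.sin x
noncomputable def Af (x : ℝ) : ℝ := x * Real.cos x / Real.sin x
noncomputable def mf (x : ℝ) : ℝ := -Sf x / Ef x

lemma hasDerivAt_Sf (x : ℝ) : HasDerivAt Sf (x * Real.sin x) x := by
  have h := (Real.hasDerivAt_sin x).sub ((hasDerivAt_id' x).mul (Real.hasDerivAt_cos x))
  refine h.congr_deriv (Eq.symm ?_)
  ring

lemma Ef_pos {x : ℝ} (hx : x ∈ Ioo 0 Real.pi) : 0 < Ef x := by
  have h2 : Real.sin (2 * x) < 2 * x := Real.sin_lt (by linarith [hx.1])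
  have : Real.sin (2 * x) = 2 * Real.sin x * Real.cos x := Real.sin_two_mul x
  unfold Ef; nlinarith

lemma Sf_pos {x : ℝ} (hx : x ∈ Ioo 0 Real.pi) : 0 < Sf x := by
  have hm : StrictMonoOn Sf (Icc 0 Real.pi) := by
    apply strictMonoOn_of_deriv_pos (convex_Icc _ _)
    · exact fun y _ => ((hasDerivAt_Sf y).continuousAt).continuousWithinAt
    · intro y hy
      rw [interior_Icc] at hy
      rw [(hasDerivAt_Sf y).deriv]
      exact mul_pos hy.1 (Real.sin_pos_of_pos_of_lt_pi hy.1 hy.2)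
  have h0 : Sf 0 = 0 := by simp [Sf]
  have := hm (left_mem_Icc.2 Real.pi_pos.le) ⟨hx.1.le, hx.2.le⟩ hx.1
  linarith

lemma hasDerivAt_Rf' (x : ℝ) : HasDerivAt Rf' (4 * Real.sin x * Sf x) x := by
  have hs := Real.hasDerivAt_sin x
  have hc := Real.hasDerivAt_cos x
  have hid := hasDerivAt_id' x
  have h := ((hid.const_mul (2:ℝ)).sub ((hs.mul hc).const_mul (3:ℝ))).add
    (hid.mul ((hc.pow 2).sub (hs.pow 2)))
  refine h.congr_deriv (Eq.symm ?_)
  simp only [Pi.sub_apply, Pi.mul_apply, Pi.pow_apply, Pi.neg_apply]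
  unfold Sf; linear_combination (2:ℝ) * Real.sin_sq_add_cos_sq x

lemma hasDerivAt_Rf (x : ℝ) : HasDerivAt Rf (Rf' x) x := by
  have hs := Real.hasDerivAt_sin x
  have hc := Real.hasDerivAt_cos x
  have hid := hasDerivAt_id' x
  have h := ((hid.pow 2).add ((hid.mul hs).mul hc)).sub ((hs.pow 2).const_mul (2:ℝ))
  refine h.congr_deriv (Eq.symm ?_)
  simp only [Pi.sub_apply, Pi.mul_apply, Pi.pow_apply, Pi.neg_apply]
  unfold Rf'; ring

lemma Rf_nonneg {x : ℝ} (hx : x ∈ Icc 0 Real.pi) : 0 ≤ Rf x := by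
  have hR' : ∀ y ∈ Icc 0 Real.pi, 0 ≤ Rf' y := by
    have hm : MonotoneOn Rf' (Icc 0 Real.pi) := by
      apply monotoneOn_of_deriv_nonneg (convex_Icc _ _)
      · exact fun y _ => ((hasDerivAt_Rf' y).continuousAt).continuousWithinAt
      · exact fun y _ => ((hasDerivAt_Rf' y).differentiableAt).differentiableWithinAt
      · intro y hy
        rw [interior_Icc] at hy
        rw [(hasDerivAt_Rf' y).deriv]
        have h1 : 0 < Real.sin y := Real.sin_pos_of_pos_of_lt_pi hy.1 hy.2
        have h2 : 0 < Sf y := Sf_pos hy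
        positivity
    intro y hy
    have h0 : Rf' 0 = 0 := by simp [Rf']
    have := hm (left_mem_Icc.2 Real.pi_pos.le) hy hy.1
    linarith
  have hm : MonotoneOn Rf (Icc 0 Real.pi) := by
    apply monotoneOn_of_deriv_nonneg (convex_Icc _ _)
    · exact fun y _ => ((hasDerivAt_Rf y).continuousAt).continuousWithinAt
    · exact fun y _ => ((hasDerivAt_Rf y).differentiableAt).differentiableWithinAt
    · intro y hy
      rw [interior_Icc] at hy
      rw [(hasDerivAt_Rf y).deriv]
      exact hR' y ⟨hy.1.le, hy.2.le⟩
  have h0 : Rf 0 = 0 := by simp [Rf]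
  have := hm (left_mem_Icc.2 Real.pi_pos.le) hx hx.1
  linarith

lemma hasDerivAt_Kf {x : ℝ} (h : Real.sin x ≠ 0) :
    HasDerivAt Kf (Sf x / Real.sin x ^ 2) x := by
  have hd := (hasDerivAt_id' x).div (Real.hasDerivAt_sin x) h
  refine hd.congr_deriv (Eq.symm ?_)
  unfold Sf; ring

lemma hasDerivAt_Af {x : ℝ} (h : Real.sin x ≠ 0) :
    HasDerivAt Af (-Ef x / Real.sin x ^ 2) x := by
  have hd := ((hasDerivAt_id' x).mul (Real.hasDerivAt_cos x)).div (Real.hasDerivAt_sin x) h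
  refine hd.congr_deriv (Eq.symm ?_)
  simp only [Pi.sub_apply, Pi.mul_apply, Pi.pow_apply, Pi.neg_apply]
  unfold Ef
  rw [div_eq_div_iff (by positivity) (by positivity)]
  linear_combination (x * Real.sin x ^ 2) * Real.sin_sq_add_cos_sq x

lemma hasDerivAt_mf {x : ℝ} (hE : Ef x ≠ 0) :
    HasDerivAt mf (-(Real.sin x * Rf x) / Ef x ^ 2) x := by
  have hS' := hasDerivAt_Sf x
  have hE' : HasDerivAt Ef (2 * Real.sin x ^ 2) x := by
    have h := (hasDerivAt_id' x).sub ((Real.hasDerivAt_sin x).mul (Real.hasDerivAt_cos x))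
    refine h.congr_deriv (Eq.symm ?_)
    nlinarith [Real.sin_sq_add_cos_sq x]
  have hd := (hS'.neg).div hE' hE
  refine hd.congr_deriv (Eq.symm ?_)
  simp only [Pi.sub_apply, Pi.mul_apply, Pi.pow_apply, Pi.neg_apply]
  unfold Sf Ef Rf
  field_simp
  ring

lemma sin_pos' {x : ℝ} (hx : x ∈ Ioo 0 Real.pi) : 0 < Real.sin x :=
  Real.sin_pos_of_pos_of_lt_pi hx.1 hx.2

lemma Kf_strictMono : StrictMonoOn Kf (Ioo 0 Real.pi) := by
  apply strictMonoOn_of_deriv_pos (convex_Ioo _ _)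
  · exact fun y hy => ((hasDerivAt_Kf (sin_pos' hy).ne').continuousAt).continuousWithinAt
  · intro y hy
    rw [interior_Ioo] at hy
    rw [(hasDerivAt_Kf (sin_pos' hy).ne').deriv]
    have := Sf_pos hy
    have := sin_pos' hy
    positivity

lemma Af_strictAnti : StrictAntiOn Af (Ioo 0 Real.pi) := by
  apply strictAntiOn_of_deriv_neg (convex_Ioo _ _)
  · exact fun y hy => ((hasDerivAt_Af (sin_pos' hy).ne').continuousAt).continuousWithinAt
  · intro y hy
    rw [interior_Ioo] at hy
    rw [(hasDerivAt_Af (sin_pos' hy).ne').deriv]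
    have h1 := Ef_pos hy
    have h2 := sin_pos' hy
    have : 0 < Ef y / Real.sin y ^ 2 := by positivity
    rw [neg_div]
    linarith

lemma mf_anti : AntitoneOn mf (Ioo 0 Real.pi) := by
  apply antitoneOn_of_deriv_nonpos (convex_Ioo _ _)
  · exact fun y hy => ((hasDerivAt_mf (Ef_pos hy).ne').continuousAt).continuousWithinAt
  · intro y hy
    rw [interior_Ioo] at hy
    exact ((hasDerivAt_mf (Ef_pos hy).ne').differentiableAt).differentiableWithinAt
  · intro y hy
    rw [interior_Ioo] at hy
    rw [(hasDerivAt_mf (Ef_pos hy).ne').deriv]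
    have h1 := Ef_pos hy
    have h2 := sin_pos' hy
    have h3 := Rf_nonneg (Ioo_subset_Icc_self hy)
    have : 0 ≤ Real.sin y * Rf y / Ef y ^ 2 := by positivity
    rw [neg_div]
    linarith

/-- supporting line inequality -/
lemma support {θ φ : ℝ} (hθ : θ ∈ Ioo 0 Real.pi) (hφ : φ ∈ Ioo 0 Real.pi) :
    Kf θ + mf θ * (Af φ - Af θ) ≤ Kf φ := by
  set g : ℝ → ℝ := fun x => Kf x - mf θ * Af x with hg
  have hgd : ∀ x ∈ Ioo 0 Real.pi,
      HasDerivAt g ((Sf x + mf θ * Ef x) / Real.sin x ^ 2) x := by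
    intro x hx
    have h := (hasDerivAt_Kf (sin_pos' hx).ne').sub
      ((hasDerivAt_Af (sin_pos' hx).ne').const_mul (mf θ))
    refine h.congr_deriv (Eq.symm ?_)
    field_simp
    ring
  have key : g θ ≤ g φ := by
    rcases le_or_gt θ φ with h | h
    · have hsub : Icc θ φ ⊆ Ioo 0 Real.pi := Icc_subset_Ioo hθ.1 hφ.2
      have hmono : MonotoneOn g (Icc θ φ) := by
        apply monotoneOn_of_deriv_nonneg (convex_Icc _ _)
        · exact fun y hy => ((hgd y (hsub hy)).continuousAt).continuousWithinAt
        · intro y hy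
          rw [interior_Icc] at hy
          exact ((hgd y (hsub (Ioo_subset_Icc_self hy))).differentiableAt).differentiableWithinAt
        · intro y hy
          rw [interior_Icc] at hy
          have hy' := hsub (Ioo_subset_Icc_self hy)
          rw [(hgd y hy').deriv]
          have hEy := Ef_pos hy'
          have hmle : mf y ≤ mf θ := mf_anti hθ hy' hy.1.le
          have : -Sf y / Ef y ≤ mf θ := hmle
          have h4 : 0 ≤ Sf y + mf θ * Ef y := by
            rw [div_le_iff₀ hEy] at this
            linarith
          positivity
      exact hmono (left_mem_Icc.2 h) (right_mem_Icc.2 h) h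
    · have hsub : Icc φ θ ⊆ Ioo 0 Real.pi := Icc_subset_Ioo hφ.1 hθ.2
      have hmono : AntitoneOn g (Icc φ θ) := by
        apply antitoneOn_of_deriv_nonpos (convex_Icc _ _)
        · exact fun y hy => ((hgd y (hsub hy)).continuousAt).continuousWithinAt
        · intro y hy
          rw [interior_Icc] at hy
          exact ((hgd y (hsub (Ioo_subset_Icc_self hy))).differentiableAt).differentiableWithinAt
        · intro y hy
          rw [interior_Icc] at hy
          have hy' := hsub (Ioo_subset_Icc_self hy)
          rw [(hgd y hy').deriv]
          have hEy := Ef_pos hy'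
          have hsy := sin_pos' hy'
          have hmle : mf θ ≤ mf y := mf_anti hy' hθ hy.2.le
          have : mf θ ≤ -Sf y / Ef y := hmle
          have h4 : Sf y + mf θ * Ef y ≤ 0 := by
            rw [le_div_iff₀ hEy] at this
            linarith
          exact div_nonpos_of_nonpos_of_nonneg h4 (by positivity)
      exact hmono (left_mem_Icc.2 h.le) (right_mem_Icc.2 h.le) h.le
  simp only [hg] at key
  nlinarith [key]

theorem stmt1 (T : ℝ) (hT : 0 < T) (ku : ℝ → ℝ)
    (hku : ∀ a : ℝ, a * T < 1 →
      |a| < ku a ∧ T * Real.sqrt ((ku a) ^ 2 - a ^ 2) = Real.arccos (a / ku a)) :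
    StrictAntiOn ku (Set.Iio (1 / T)) ∧ ConvexOn ℝ (Set.Iio (1 / T)) ku := by
  have key : ∀ a ∈ Set.Iio (1 / T), ∃ θ ∈ Set.Ioo 0 Real.pi,
      Kf θ = T * ku a ∧ Af θ = T * a := by
    intro a ha
    have haT : a * T < 1 := by
      have := (mul_lt_mul_of_pos_right (Set.mem_Iio.1 ha) hT)
      rwa [one_div, inv_mul_cancel₀ hT.ne'] at this
    obtain ⟨hk1, hk2⟩ := hku a haT
    set k := ku a with hk
    have hk0 : 0 < k := lt_of_le_of_lt (abs_nonneg a) hk1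
    set u : ℝ := a / k with hu
    have hu1 : |u| < 1 := by
      rw [hu, abs_div, abs_of_pos hk0, div_lt_one hk0]
      exact hk1
    obtain ⟨hum, hup⟩ := abs_lt.1 hu1
    set θ := Real.arccos u with hθdef
    have hθ0 : 0 < θ := Real.arccos_pos.2 hup
    have hθπ : θ < Real.pi := by
      rw [hθdef, Real.arccos_eq_pi_div_two_sub_arcsin]
      have := Real.neg_pi_div_two_lt_arcsin.2 hum
      linarith [Real.pi_pos]
    have hcos : Real.cos θ = u := Real.cos_arccos hum.le hup.le
    have hsin : Real.sin θ = Real.sqrt (1 - u ^ 2) := Real.sin_arccos u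
    have hsθ : 0 < Real.sin θ := Real.sin_pos_of_pos_of_lt_pi hθ0 hθπ
    have hsq : Real.sqrt (k ^ 2 - a ^ 2) = k * Real.sin θ := by
      have h1 : k ^ 2 - a ^ 2 = k ^ 2 * (1 - u ^ 2) := by
        rw [hu]; field_simp
      rw [h1, Real.sqrt_mul (sq_nonneg k), Real.sqrt_sq hk0.le, hsin]
    have heq : T * (k * Real.sin θ) = θ := by rw [← hsq]; exact hk2
    have hK : Kf θ = T * k := by
      rw [Kf, eq_comm, eq_div_iff hsθ.ne']
      linarith [heq]
    have hA : Af θ = T * a := by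
      have hak : a = k * u := by rw [hu]; field_simp
      rw [Af, hcos, div_eq_iff hsθ.ne', hak]
      nlinarith [heq]
    exact ⟨θ, ⟨hθ0, hθπ⟩, hK, hA⟩
  constructor
  · intro a ha a' ha' hlt
    obtain ⟨θ, hθ, hK, hA⟩ := key a ha
    obtain ⟨θ', hθ', hK', hA'⟩ := key a' ha'
    have hAlt : Af θ < Af θ' := by
      rw [hA, hA']
      exact mul_lt_mul_of_pos_left hlt hT
    have hθlt : θ' < θ := by
      rcases lt_trichotomy θ θ' with h | h | h
      · exact absurd (Af_strictAnti hθ hθ' h) (by linarith)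
      · rw [h] at hAlt; linarith
      · exact h
    have := Kf_strictMono hθ' hθ hθlt
    rw [hK, hK'] at this
    exact lt_of_mul_lt_mul_left this hT.le
  · refine ⟨convex_Iio _, ?_⟩
    intro x hx y hy t s ht hs hts
    have hz : t • x + s • y ∈ Set.Iio (1 / T) := (convex_Iio _) hx hy ht hs hts
    simp only [smul_eq_mul] at hz ⊢
    obtain ⟨θz, hθz, hKz, hAz⟩ := key _ hz
    obtain ⟨θx, hθx, hKx, hAx⟩ := key x hx
    obtain ⟨θy, hθy, hKy, hAy⟩ := key y hy
    have hx' := support hθz hθx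
    have hy' := support hθz hθy
    rw [hKz, hKx, hAz, hAx] at hx'
    rw [hKz, hKy, hAz, hAy] at hy'
    have h1 : t * (T * ku x) ≥ t * (T * ku (t * x + s * y) + mf θz * (T * x - T * (t * x + s * y))) :=
      mul_le_mul_of_nonneg_left hx' ht
    have h2 : s * (T * ku y) ≥ s * (T * ku (t * x + s * y) + mf θz * (T * y - T * (t * x + s * y))) :=
      mul_le_mul_of_nonneg_left hy' hs
    have h3 : mf θz * (t * (T * x - T * (t * x + s * y)) + s * (T * y - T * (t * x + s * y))) = 0 := by
      linear_combination (-(mf θz * T * (t * x + s * y))) * hts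
    have h4 : (t + s) * (T * ku (t * x + s * y)) = T * ku (t * x + s * y) := by
      rw [hts, one_mul]
    have hcomb : T * ku (t * x + s * y) ≤ T * (t * ku x + s * ku y) := by nlinarith [h1, h2, h3, h4]
    exact le_of_mul_le_mul_left (by linarith) hT
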